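/- Let d ≥ 1, k ≥ 1, N = C(d+k,d). Suppose a₁,...,a_N are monomials in d variables with nonnegative integer exponents such that ∑_{j=1}^N deg(a_j) ≤ kdN/(d+1) and the complete generalised Wronskian W_d^k(a₁,...,a_N) is a nonzero constant. Then, up to reordering and scalar factors, the a_j are exactly the divided-power monomials x^{r_j}/r_j! for the N multi-indices r_j of total degree ≤ k; more precisely, the multiset of exponent multi-indices of a₁,...,a_N equals the set of all multi-indices of total degree ≤ k. -/
import Mathlib

open MvPolynomial

/-- Iterated partial derivative `∂^{|r|}/∂x^r` along a multi-index `r : Fin d → ℕ`. -/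
noncomputable def wDeriv (d : ℕ) (r : Fin d → ℕ)
    (p : MvPolynomial (Fin d) ℚ) : MvPolynomial (Fin d) ℚ :=
  (List.finRange d).foldl (fun q i => (⇑(pderiv i))^[r i] q) p

lemma iter_pderiv (d : ℕ) (i : Fin d) (m : ℕ) (s : Fin d →₀ ℕ) (a : ℚ) :
    (⇑(pderiv i))^[m] (monomial s a) =
      monomial (s - Finsupp.single i m) (a * (s i).descFactorial m) := by
  induction m with
  | zero => simp
  | succ m ih =>
    rw [Function.iterate_succ_apply', ih, pderiv_monomial]
    have h1 : s - Finsupp.single i m - Finsupp.single i 1 = s - Finsupp.single i (m+1) := by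
      rw [tsub_tsub, ← Finsupp.single_add]
    have h2 : (s - Finsupp.single i m) i = s i - m := by simp
    rw [h1, h2, Nat.descFactorial_succ]
    congr 1
    push_cast
    ring

lemma foldl_pderiv (d : ℕ) (rr : Fin d → ℕ) (L : List (Fin d)) :
    ∀ (s : Fin d →₀ ℕ) (a : ℚ), L.Nodup →
    L.foldl (fun q i => (⇑(pderiv i))^[rr i] q) (monomial s a) =
      monomial (s - (L.map fun i => Finsupp.single i (rr i)).sum)
        (a * ((L.map fun i => (s i).descFactorial (rr i)).prod : ℕ)) := by
  induction L with
  | nil => intro s a _ ; simp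
  | cons i L ih =>
    intro s a hL
    obtain ⟨hi, hL'⟩ := List.nodup_cons.mp hL
    rw [List.foldl_cons, iter_pderiv, ih _ _ hL']
    have hs : ∀ j ∈ L, ((s - Finsupp.single i (rr i)) j) = s j := by
      intro j hj
      have : (Finsupp.single i (rr i)) j = 0 :=
        Finsupp.single_eq_of_ne (fun h => hi (h ▸ hj))
      rw [Finsupp.tsub_apply, this, Nat.sub_zero]
    have hmap : (L.map fun j => ((s - Finsupp.single i (rr i)) j).descFactorial (rr j))
        = L.map fun j => (s j).descFactorial (rr j) :=
      List.map_congr_left (fun j hj => by rw [hs j hj])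
    rw [hmap, tsub_tsub]
    simp only [List.map_cons, List.sum_cons, List.prod_cons]
    congr 1
    push_cast
    ring

lemma monomial_form (d : ℕ) (u : Fin d → ℕ) (a : ℚ) :
    C a * ∏ i, X i ^ u i
      = (monomial (Finsupp.equivFunOnFinite.symm u) a : MvPolynomial (Fin d) ℚ) := by
  rw [monomial_eq, Finsupp.prod_fintype]
  · simp
  · intro i; exact pow_zero _

lemma entry_ne_zero (d : ℕ) (rr u : Fin d → ℕ) (a : ℚ)
    (h : wDeriv d rr (C a * ∏ i, X i ^ u i) ≠ 0) : ∀ i, rr i ≤ u i := by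
  intro i
  by_contra hlt
  push_neg at hlt
  apply h
  rw [monomial_form, wDeriv, foldl_pderiv d rr _ _ _ (List.nodup_finRange d),
    monomial_eq_zero]
  have hmem : (0 : ℕ) ∈ (List.finRange d).map
      fun j => ((Finsupp.equivFunOnFinite.symm u) j).descFactorial (rr j) := by
    refine List.mem_map.mpr ⟨i, List.mem_finRange i, ?_⟩
    simp [Nat.descFactorial_eq_zero_iff_lt, hlt]
  rw [List.prod_eq_zero hmem]
  simp

lemma sum_coord_eq {d k : ℕ} (S : Finset (Fin d → ℕ))
    (hS : ∀ v, v ∈ S ↔ (∑ i, v i) ≤ k) (i l : Fin d) :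
    ∑ v ∈ S, v i = ∑ v ∈ S, v l := by
  refine Finset.sum_nbij' (i := fun v => v ∘ (Equiv.swap i l))
    (j := fun v => v ∘ (Equiv.swap i l)) ?_ ?_ ?_ ?_ ?_
  · intro v hv
    rw [hS] at hv ⊢
    rw [show ∑ j, (v ∘ (Equiv.swap i l)) j = ∑ j, v j from Equiv.sum_comp _ v]
    exact hv
  · intro v hv
    rw [hS] at hv ⊢
    rw [show ∑ j, (v ∘ (Equiv.swap i l)) j = ∑ j, v j from Equiv.sum_comp _ v]
    exact hv
  · intro v _; funext j; simp [Function.comp, Equiv.swap_apply_self]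
  · intro v _; funext j; simp [Function.comp, Equiv.swap_apply_self]
  · intro v _; simp [Function.comp, Equiv.swap_apply_right]

lemma sum_sub_eq {d k : ℕ} (S : Finset (Fin (d+1) → ℕ))
    (hS : ∀ v, v ∈ S ↔ (∑ i, v i) ≤ k) :
    ∑ v ∈ S, (k - ∑ i, v i) = ∑ v ∈ S, v 0 := by
  have hsplit : ∀ v : Fin (d+1) → ℕ,
      ∑ i, v i = (∑ j : Fin d, Fin.init v j) + v (Fin.last d) := by
    intro v
    rw [Fin.sum_univ_castSucc]
    rfl
  have htail : ∀ v : Fin (d+1) → ℕ,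
      ∑ i, v i = v 0 + ∑ j : Fin d, Fin.tail v j := by
    intro v
    rw [Fin.sum_univ_succ]
    rfl
  have hlast : ∀ v : Fin (d+1) → ℕ, v (Fin.last d) ≤ ∑ i, v i := fun v =>
    Finset.single_le_sum (fun _ _ => Nat.zero_le _) (Finset.mem_univ _)
  have h0 : ∀ v : Fin (d+1) → ℕ, v 0 ≤ ∑ i, v i := fun v =>
    Finset.single_le_sum (fun _ _ => Nat.zero_le _) (Finset.mem_univ _)
  have hsumcons : ∀ (x : ℕ) (p : Fin d → ℕ),
      ∑ j, (Fin.cons x p : Fin (d+1) → ℕ) j = x + ∑ j, p j := fun x p => Fin.sum_cons x p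
  have hsumsnoc : ∀ (p : Fin d → ℕ) (x : ℕ),
      ∑ j, (Fin.snoc p x : Fin (d+1) → ℕ) j = (∑ j, p j) + x := by
    intro p x
    rw [Fin.sum_univ_castSucc]
    simp
  refine Finset.sum_nbij' (i := fun v => Fin.cons (k - ∑ j, v j) (Fin.init v))
    (j := fun w => Fin.snoc (Fin.tail w) (k - ∑ j, w j)) ?_ ?_ ?_ ?_ ?_
  · intro v hv
    rw [hS] at hv ⊢
    rw [hsumcons]
    have := hsplit v
    have := hlast v
    omega
  · intro w hw
    rw [hS] at hw ⊢
    rw [hsumsnoc]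
    have := htail w
    have := h0 w
    omega
  · intro v hv
    rw [hS] at hv
    have hc : Fin.tail (Fin.cons (k - ∑ j, v j) (Fin.init v) : Fin (d+1) → ℕ) = Fin.init v :=
      Fin.tail_cons _ _
    have hv2 : k - ∑ j, (Fin.cons (k - ∑ j, v j) (Fin.init v) : Fin (d+1) → ℕ) j
        = v (Fin.last d) := by
      rw [hsumcons]
      have := hsplit v
      have := hlast v
      omega
    simp only [hc, hv2]
    exact Fin.snoc_init_self v
  · intro w hw
    rw [hS] at hw
    have hc : Fin.init (Fin.snoc (Fin.tail w) (k - ∑ j, w j) : Fin (d+1) → ℕ) = Fin.tail w :=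
      Fin.init_snoc _ _
    have hv2 : k - ∑ j, (Fin.snoc (Fin.tail w) (k - ∑ j, w j) : Fin (d+1) → ℕ) j = w 0 := by
      rw [hsumsnoc]
      have := htail w
      have := h0 w
      omega
    simp only [hc, hv2]
    exact Fin.cons_self_tail w
  · intro v _
    simp

lemma key_identity {d k : ℕ} (S : Finset (Fin (d+1) → ℕ))
    (hS : ∀ v, v ∈ S ↔ (∑ i, v i) ≤ k) :
    (∑ v ∈ S, ∑ i, v i) * ((d+1) + 1) = k * (d+1) * S.card := by
  set A := ∑ v ∈ S, v 0 with hA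
  have h1 : ∑ v ∈ S, ∑ i, v i = (d+1) * A := by
    calc ∑ v ∈ S, ∑ i, v i = ∑ i : Fin (d+1), ∑ v ∈ S, v i := Finset.sum_comm
      _ = ∑ _i : Fin (d+1), A := Finset.sum_congr rfl (fun i _ => sum_coord_eq S hS i 0)
      _ = (d+1) * A := by simp [mul_comm]
  have h2 : k * S.card = (d+2) * A := by
    have : ∑ v ∈ S, (k : ℕ) = ∑ v ∈ S, ((∑ i, v i) + (k - ∑ i, v i)) := by
      refine Finset.sum_congr rfl fun v hv => ?_
      exact (Nat.add_sub_cancel' ((hS v).mp hv)).symm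
    rw [Finset.sum_const, smul_eq_mul, mul_comm] at this
    calc k * S.card = ∑ v ∈ S, ((∑ i, v i) + (k - ∑ i, v i)) := this
      _ = (∑ v ∈ S, ∑ i, v i) + ∑ v ∈ S, (k - ∑ i, v i) := Finset.sum_add_distrib
      _ = (d+1) * A + A := by rw [sum_sub_eq S hS, h1]
      _ = (d+2) * A := by ring
  rw [h1]
  calc (d+1) * A * ((d+1)+1) = (d+1) * ((d+2) * A) := by ring
    _ = (d+1) * (k * S.card) := by rw [h2]
    _ = k * (d+1) * S.card := by ring

/-- **consistency lemma.** Let `d ≥ 1`, `k ≥ 1`, `N = C(d+k,d)`, and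
let `r : Fin N → ℕ^d` enumerate all multi-indices of total degree ≤ k.  Let `T` be
the total degree shift, `T(d+1) = kdN`.  Suppose `a₁,…,a_N` are monomials
`a_n = c_n · x^{k_n}` with nonzero coefficients, with `∑_n deg(a_n) ≤ T`, and whose
complete generalised Wronskian is a nonzero constant.  Then the exponent
multi-indices `k₁,…,k_N` are pairwise distinct and are exactly all multi-indices of
total degree ≤ k. -/
theorem stmt15 (d k : ℕ) (hd : 1 ≤ d) (hk : 1 ≤ k)
    (N : ℕ) (hN : N = Nat.choose (d + k) d)
    (r : Fin N → Fin d → ℕ) (hinj : Function.Injective r)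
    (hcomp : ∀ v : Fin d → ℕ, (∑ i, v i) ≤ k ↔ ∃ j, r j = v)
    (T : ℕ) (hT : T * (d + 1) = k * d * N)
    (kk : Fin N → Fin d → ℕ) (c : Fin N → ℚ) (hc : ∀ n, c n ≠ 0)
    (hdeg : (∑ n, ∑ i, kk n i) ≤ T)
    (t : ℚ) (ht : t ≠ 0)
    (hW : Matrix.det (Matrix.of fun j n : Fin N =>
        wDeriv d (r j) (C (c n) * ∏ i, X i ^ kk n i)) = C t) :
    Function.Injective kk ∧
      ∀ v : Fin d → ℕ, (∑ i, v i) ≤ k ↔ ∃ n, kk n = v := by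
  classical
  obtain ⟨d', rfl⟩ : ∃ d', d = d' + 1 := ⟨d - 1, by omega⟩
  set S : Finset (Fin (d'+1) → ℕ) := Finset.univ.image r with hSdef
  have hmemS : ∀ v, v ∈ S ↔ (∑ i, v i) ≤ k := by
    intro v
    rw [hSdef, Finset.mem_image]
    constructor
    · rintro ⟨j, _, rfl⟩; exact (hcomp _).mpr ⟨j, rfl⟩
    · intro h; obtain ⟨j, hj⟩ := (hcomp v).mp h; exact ⟨j, Finset.mem_univ j, hj⟩
  have hcard : S.card = N := by
    rw [hSdef, Finset.card_image_of_injective _ hinj, Finset.card_univ, Fintype.card_fin]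
  -- T equals the sum of total degrees over S
  have hTS : ∑ v ∈ S, ∑ i, v i = T := by
    have h := key_identity S hmemS
    rw [hcard] at h
    have : (∑ v ∈ S, ∑ i, v i) * ((d'+1) + 1) = T * ((d'+1) + 1) := by
      rw [h, hT]
    exact Nat.eq_of_mul_eq_mul_right (Nat.succ_pos _) this
  have hrT : ∑ j, ∑ i, r j i = T := by
    rw [← hTS, hSdef, Finset.sum_image (fun x _ y _ h => hinj h)]
  -- the determinant is nonzero, extract a permutation
  have hdet : (Matrix.of fun j n : Fin N =>
      wDeriv (d'+1) (r j) (C (c n) * ∏ i, X i ^ kk n i)).det ≠ 0 := by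
    rw [hW]
    simpa using ht
  rw [Matrix.det_apply] at hdet
  obtain ⟨σ, _, hσ⟩ := Finset.exists_ne_zero_of_sum_ne_zero hdet
  have hprodne : (∏ n, (Matrix.of fun j n : Fin N =>
      wDeriv (d'+1) (r j) (C (c n) * ∏ i, X i ^ kk n i)) (σ n) n) ≠ 0 := by
    intro h0
    exact hσ (by rw [h0, smul_zero])
  have hle : ∀ n, ∀ i, r (σ n) i ≤ kk n i := by
    intro n
    have := Finset.prod_ne_zero_iff.mp hprodne n (Finset.mem_univ n)
    exact entry_ne_zero (d'+1) (r (σ n)) (kk n) (c n) (by simpa using this)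
  -- degree sums
  have h1 : ∑ n, ∑ i, r (σ n) i = T := by
    rw [Equiv.sum_comp σ (fun j => ∑ i, r j i)]
    exact hrT
  have hle' : ∀ n ∈ Finset.univ, (∑ i, r (σ n) i) ≤ ∑ i, kk n i :=
    fun n _ => Finset.sum_le_sum (fun i _ => hle n i)
  have hsum_eq : ∑ n, ∑ i, r (σ n) i = ∑ n, ∑ i, kk n i :=
    le_antisymm (Finset.sum_le_sum hle') (by rw [h1]; exact hdeg)
  have hpt := (Finset.sum_eq_sum_iff_of_le hle').mp hsum_eq
  have hkr : ∀ n, kk n = r (σ n) := by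
    intro n
    have := (Finset.sum_eq_sum_iff_of_le (fun i _ => hle n i)).mp (hpt n (Finset.mem_univ n))
    exact funext fun i => ((this i (Finset.mem_univ i))).symm
  have hkk : kk = r ∘ σ := funext hkr
  constructor
  · rw [hkk]
    exact hinj.comp σ.injective
  · intro v
    rw [hcomp v, hkk]
    constructor
    · rintro ⟨j, rfl⟩; exact ⟨σ.symm j, by simp⟩
    · rintro ⟨n, rfl⟩; exact ⟨σ n, rfl⟩
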